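/- Let d = 2, let D_0 ≥ 1 and let D_j = 6^j·D_0 for every j ≥ 1. For every n ≥ 1 and every A ⊆ Z_n^2 with |A| ≥ 288·n²/D_0², there exists J ∈ ℕ and a (1, D)-dormitory hierarchy (A_j, C_j)_{j ≤ J} on A such that |A_J| ≥ |A| − 144·n²/D_0² and the partition C_0 contains only singletons. -/

import Mathlib

/-- The distance on the torus `(ℤ/nℤ)^d`: the infimum of the sup-norm distances between
integer lifts of the two points. -/
noncomputable def torusDist {d n : ℕ} (x y : Fin d → ZMod n) : ℕ :=
  sInf {k : ℕ | ∃ a b : Fin d → ℤ,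
    (∀ i, (a i : ZMod n) = x i) ∧ (∀ i, (b i : ZMod n) = y i) ∧
    (Finset.univ.sup fun i => (a i - b i).natAbs) = k}

/-- The closed ball of radius `r` around `x` in the torus `(ℤ/nℤ)^d`. -/
def torusBall {d n : ℕ} (x : Fin d → ZMod n) (r : ℕ) : Set (Fin d → ZMod n) :=
  {y | torusDist x y ≤ r}

/-- A set `C ⊆ (ℤ/nℤ)^d` is `r`-connected if any two of its points can be joined by a
finite sequence of points of `C` whose consecutive terms are at distance at most `r`. -/
def torusRConnected {d n : ℕ} (r : ℕ) (C : Set (Fin d → ZMod n)) : Prop :=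
  ∀ x ∈ C, ∀ y ∈ C, ∃ (k : ℕ) (f : ℕ → Fin d → ZMod n),
    f 0 = x ∧ f k = y ∧ (∀ j ≤ k, f j ∈ C) ∧ ∀ j < k, torusDist (f j) (f (j + 1)) ≤ r

/-- The diameter of a subset of the torus `(ℤ/nℤ)^d`. -/
noncomputable def torusDiam {d n : ℕ} (C : Set (Fin d → ZMod n)) : ℕ :=
  sSup {k : ℕ | ∃ x ∈ C, ∃ y ∈ C, torusDist x y = k}

/-- `𝒞` is a partition of the set `A`: its members are non-empty, pairwise disjoint,
and their union is `A`. -/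
def IsPartitionOf {α : Type*} (𝒞 : Set (Set α)) (A : Set α) : Prop :=
  (∀ C ∈ 𝒞, C.Nonempty) ∧ ⋃₀ 𝒞 = A ∧
    ∀ C ∈ 𝒞, ∀ C' ∈ 𝒞, C ≠ C' → Disjoint C C'

/-- A `(v, D)`-dormitory hierarchy on a set `A ⊆ (ℤ/nℤ)^d`: a decreasing sequence of
subsets `A ⊇ A_0 ⊇ ⋯ ⊇ A_J` together with partitions `𝒞_j` of `A_j` such that:
(i) every cluster `C ∈ 𝒞_j` satisfies `|C| ≥ 2^⌊j/2⌋ v`;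
(ii) every cluster `C ∈ 𝒞_{j+1} \ 𝒞_j` has diameter at most `D j` and is the union of
two clusters of `𝒞_j`;
(iii) the last partition `𝒞_J` consists of a single set. -/
structure DormitoryHierarchy (d n v : ℕ) (D : ℕ → ℕ) (A : Set (Fin d → ZMod n)) where
  J : ℕ
  level : ℕ → Set (Fin d → ZMod n)
  part : ℕ → Set (Set (Fin d → ZMod n))
  level_zero_subset : level 0 ⊆ A
  level_antitone : ∀ j, j + 1 ≤ J → level (j + 1) ⊆ level j
  part_isPartition : ∀ j ≤ J, IsPartitionOf (part j) (level j)
  card_ge : ∀ j ≤ J, ∀ C ∈ part j, 2 ^ (j / 2) * v ≤ C.ncard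
  merge : ∀ j, j + 1 ≤ J → ∀ C ∈ part (j + 1), C ∉ part j →
    torusDiam C ≤ D j ∧ ∃ C₀ ∈ part j, ∃ C₁ ∈ part j, C = C₀ ∪ C₁
  final : ∃ C, part J = {C}

namespace Dorm

variable {d n : ℕ}

lemma torusDist_le (x y : Fin d → ZMod n) (a b : Fin d → ℤ)
    (ha : ∀ i, (a i : ZMod n) = x i) (hb : ∀ i, (b i : ZMod n) = y i)
    {k : ℕ} (h : ∀ i, (a i - b i).natAbs ≤ k) : torusDist x y ≤ k := by
  have hmem : (Finset.univ.sup fun i => (a i - b i).natAbs) ∈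
      {k : ℕ | ∃ a b : Fin d → ℤ,
        (∀ i, (a i : ZMod n) = x i) ∧ (∀ i, (b i : ZMod n) = y i) ∧
        (Finset.univ.sup fun i => (a i - b i).natAbs) = k} := ⟨a, b, ha, hb, rfl⟩
  exact le_trans (Nat.sInf_le hmem) (Finset.sup_le fun i _ => h i)

lemma torusDist_set_nonempty [NeZero n] (x y : Fin d → ZMod n) :
    ∃ k, k ∈ {k : ℕ | ∃ a b : Fin d → ℤ,
      (∀ i, (a i : ZMod n) = x i) ∧ (∀ i, (b i : ZMod n) = y i) ∧
      (Finset.univ.sup fun i => (a i - b i).natAbs) = k} := by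
  refine ⟨_, (fun i => ((x i).val : ℤ)), (fun i => ((y i).val : ℤ)), ?_, ?_, rfl⟩ <;>
    intro i <;> simp [ZMod.natCast_val, ZMod.intCast_cast]

lemma torusDist_spec [NeZero n] (x y : Fin d → ZMod n) :
    ∃ a b : Fin d → ℤ,
      (∀ i, (a i : ZMod n) = x i) ∧ (∀ i, (b i : ZMod n) = y i) ∧
      (Finset.univ.sup fun i => (a i - b i).natAbs) = torusDist x y :=
  Nat.sInf_mem (torusDist_set_nonempty x y)

lemma torusDist_triangle [NeZero n] (x y z : Fin d → ZMod n) :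
    torusDist x z ≤ torusDist x y + torusDist y z := by
  obtain ⟨a, b, ha, hb, hab⟩ := torusDist_spec x y
  obtain ⟨b', c', hb', hc', hbc⟩ := torusDist_spec y z
  refine torusDist_le x z a (fun i => c' i + (b i - b' i)) ha ?_ ?_
  · intro i
    push_cast
    rw [hc' i, hb i, hb' i]
    ring
  · intro i
    have h1 : (a i - b i).natAbs ≤ torusDist x y := by
      rw [← hab]; exact Finset.le_sup (f := fun i => (a i - b i).natAbs) (Finset.mem_univ i)
    have h2 : (b' i - c' i).natAbs ≤ torusDist y z := by
      rw [← hbc]; exact Finset.le_sup (f := fun i => (b' i - c' i).natAbs) (Finset.mem_univ i)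
    calc (a i - (c' i + (b i - b' i))).natAbs
        = ((a i - b i) + (b' i - c' i)).natAbs := by ring_nf
      _ ≤ (a i - b i).natAbs + (b' i - c' i).natAbs := Int.natAbs_add_le _ _
      _ ≤ torusDist x y + torusDist y z := Nat.add_le_add h1 h2

lemma torusDist_same_box [NeZero n] (x y : Fin d → ZMod n) (β : ℕ) (hβ : 1 ≤ β)
    (h : ∀ i, (x i).val / β = (y i).val / β) : torusDist x y ≤ β - 1 := by
  refine torusDist_le x y (fun i => ((x i).val : ℤ)) (fun i => ((y i).val : ℤ))
    (fun i => by simp [ZMod.natCast_val, ZMod.intCast_cast])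
    (fun i => by simp [ZMod.natCast_val, ZMod.intCast_cast]) ?_
  intro i
  show ((((x i).val : ℤ)) - (((y i).val : ℤ))).natAbs ≤ β - 1
  have h1 := Nat.div_add_mod (x i).val β
  have h2 := Nat.div_add_mod (y i).val β
  have h3 : (x i).val % β < β := Nat.mod_lt _ hβ
  have h4 : (y i).val % β < β := Nat.mod_lt _ hβ
  have h5 : β * ((x i).val / β) = β * ((y i).val / β) := by rw [h i]
  omega

lemma torusDist_comm (x y : Fin d → ZMod n) : torusDist x y = torusDist y x := by
  unfold torusDist
  congr 1
  ext k
  constructor <;> rintro ⟨a, b, ha, hb, rfl⟩ <;>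
    exact ⟨b, a, hb, ha, by
      apply Finset.sup_congr rfl
      intro i _
      rw [← Int.natAbs_neg, neg_sub]⟩

lemma torusDiam_le {C : Set (Fin d → ZMod n)} {k : ℕ}
    (h : ∀ x ∈ C, ∀ y ∈ C, torusDist x y ≤ k) : torusDiam C ≤ k := by
  apply csSup_le'
  rintro m ⟨x, hx, y, hy, rfl⟩
  exact h x hx y hy

end Dorm

noncomputable section
open Classical

namespace Dorm

variable {n : ℕ}

abbrev Pt (n : ℕ) := Fin 2 → ZMod n
abbrev Cl (n : ℕ) := Finset (Pt n)

/-- box side at step j -/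
def bb (D₀ j : ℕ) : ℕ := if j = 0 then D₀ else 4 * 6 ^ (j-1) * D₀

/-- diameter bound at level j -/
def Ebd (D₀ j : ℕ) : ℕ := if j = 0 then 0 else 6 ^ (j-1) * D₀

/-- size requirement at level j -/
def R (j : ℕ) : ℕ := 2 ^ (j / 2)

def rep (C : Cl n) : Pt n := if h : C.Nonempty then h.choose else fun _ => 0

lemma rep_mem {C : Cl n} (h : C.Nonempty) : rep C ∈ C := by
  rw [rep, dif_pos h]; exact h.choose_spec

/-- box key of a cluster at step j -/
def κ (D₀ j : ℕ) (C : Cl n) : ℕ × ℕ :=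
  ((rep C 0).val / bb D₀ j, (rep C 1).val / bb D₀ j)

def Kfin (n D₀ j : ℕ) : Finset (ℕ × ℕ) :=
  (Finset.range (n / bb D₀ j + 1)) ×ˢ (Finset.range (n / bb D₀ j + 1))

def rLe (a b : Cl n) : Prop := a.card ≤ b.card

instance : DecidableRel (rLe (n := n)) := fun _ _ => Nat.decLe _ _
instance : IsTotal (Cl n) rLe := ⟨fun _ _ => Nat.le_total _ _⟩
instance : IsTrans (Cl n) rLe := ⟨fun _ _ _ => Nat.le_trans⟩

def sortC (l : List (Cl n)) : List (Cl n) := l.insertionSort rLe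

lemma sortC_perm (l : List (Cl n)) : List.Perm (sortC l) l := l.perm_insertionSort rLe

lemma sortC_sorted (l : List (Cl n)) : (sortC l).Pairwise rLe := List.pairwise_insertionSort rLe l

lemma sorted_le_getLast :
    ∀ (l : List (Cl n)) (h : l ≠ []), l.Pairwise rLe → ∀ C ∈ l, C.card ≤ (l.getLast h).card := by
  intro l
  induction l with
  | nil => intro h; simp at h
  | cons a t ih =>
    intro h hs C hC
    cases t with
    | nil => simp at hC; simp [hC]
    | cons b t' =>
      rw [List.getLast_cons (by simp : b :: t' ≠ [])]
      rcases List.mem_cons.mp hC with rfl | hC'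
      · exact (List.pairwise_cons.mp hs).1 _ (List.getLast_mem _)
      · exact ih (by simp) (List.pairwise_cons.mp hs).2 C hC'

def pairup (t : ℕ) : List (Cl n) → List (Cl n)
  | [] => []
  | [a] => if t ≤ a.card then [a] else []
  | a :: b :: l => (a ∪ b) :: pairup t l

def massOf (l : List (Cl n)) : ℕ := (l.map Finset.card).sum

lemma mem_pairup {t : ℕ} :
    ∀ (l : List (Cl n)) (C : Cl n), C ∈ pairup t l →
      C ∈ l ∨ ∃ a ∈ l, ∃ b ∈ l, C = a ∪ b
  | [], C, h => by simp [pairup] at h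
  | [a], C, h => by
    rw [pairup] at h
    split at h
    · simp at h; exact Or.inl (by simp [h])
    · simp at h
  | a :: b :: l, C, h => by
    rw [pairup] at h
    rcases List.mem_cons.mp h with rfl | h'
    · exact Or.inr ⟨a, by simp, b, by simp, rfl⟩
    · rcases mem_pairup l C h' with h'' | ⟨x, hx, y, hy, hxy⟩
      · exact Or.inl (by simp [h''])
      · exact Or.inr ⟨x, by simp [hx], y, by simp [hy], hxy⟩


lemma pairup_nonempty {t : ℕ} :
    ∀ (l : List (Cl n)), (∀ C ∈ l, C.Nonempty) → ∀ C ∈ pairup t l, C.Nonempty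
  | [], _, C, h => by simp [pairup] at h
  | [a], hl, C, h => by
    rw [pairup] at h
    split at h
    · simp only [List.mem_singleton] at h
      subst h; exact hl _ (by simp)
    · simp at h
  | a :: b :: l, hl, C, h => by
    rw [pairup] at h
    rcases List.mem_cons.mp h with rfl | h'
    · exact Finset.Nonempty.inl (hl a (by simp))
    · exact pairup_nonempty l (fun C hC => hl C (by simp [hC])) C h'

lemma pairup_card {t r : ℕ} (ht : t ≤ 2 * r) :
    ∀ (l : List (Cl n)), (∀ C ∈ l, r ≤ C.card) → List.Pairwise Disjoint l →
      ∀ C ∈ pairup t l, t ≤ C.card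
  | [], _, _, C, h => by simp [pairup] at h
  | [a], hl, _, C, h => by
    rw [pairup] at h
    split at h
    · simp at h; subst h; assumption
    · simp at h
  | a :: b :: l, hl, hd, C, h => by
    rw [pairup] at h
    rcases List.mem_cons.mp h with rfl | h'
    · have hab : Disjoint a b := (List.pairwise_cons.mp hd).1 b (by simp)
      rw [Finset.card_union_of_disjoint hab]
      have := hl a (by simp); have := hl b (by simp); omega
    · exact pairup_card ht l (fun C hC => hl C (by simp [hC]))
        (hd.sublist ((List.sublist_cons_self b l).trans (List.sublist_cons_self a (b :: l)))) C h'

lemma pairup_disj_of {t : ℕ} {E : Cl n} :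
    ∀ (l : List (Cl n)), (∀ y ∈ l, Disjoint E y) → ∀ C ∈ pairup t l, Disjoint E C := by
  intro l hE C hC
  rcases mem_pairup l C hC with h | ⟨x, hx, y, hy, rfl⟩
  · exact hE C h
  · rw [Finset.disjoint_union_right]; exact ⟨hE x hx, hE y hy⟩

lemma pairup_disjoint {t : ℕ} :
    ∀ (l : List (Cl n)), List.Pairwise Disjoint l → List.Pairwise Disjoint (pairup t l)
  | [] , _ => by simp [pairup]
  | [a], _ => by rw [pairup]; split <;> simp
  | a :: b :: l, hd => by
    rw [pairup]
    have h1 : ∀ y ∈ l, Disjoint a y := fun y hy => (List.pairwise_cons.mp hd).1 y (by simp [hy])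
    have h2 : ∀ y ∈ l, Disjoint b y :=
      fun y hy => (List.pairwise_cons.mp (List.pairwise_cons.mp hd).2).1 y hy
    have hl : List.Pairwise Disjoint l := (List.pairwise_cons.mp (List.pairwise_cons.mp hd).2).2
    refine List.pairwise_cons.mpr ⟨?_, pairup_disjoint l hl⟩
    intro C hC
    exact pairup_disj_of l (fun y hy => by
      rw [Finset.disjoint_union_left]; exact ⟨h1 y hy, h2 y hy⟩) C hC

lemma pairup_mass {t : ℕ} :
    ∀ (l : List (Cl n)), List.Pairwise Disjoint l →
      massOf l ≤ massOf (pairup t l) + (t - 1)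
  | [], _ => by simp [pairup, massOf]
  | [a], _ => by
    rw [pairup]
    split
    · simp [massOf]
    · simp only [massOf, List.map_cons, List.map_nil, List.sum_cons, List.sum_nil]
      omega
  | a :: b :: l, hd => by
    rw [pairup]
    have hab : Disjoint a b := (List.pairwise_cons.mp hd).1 b (by simp)
    have hl : List.Pairwise Disjoint l := (List.pairwise_cons.mp (List.pairwise_cons.mp hd).2).2
    have := pairup_mass (t := t) l hl
    simp only [massOf, List.map_cons, List.sum_cons] at *
    rw [Finset.card_union_of_disjoint hab]
    omega

lemma pairup_mass_eq {t : ℕ} :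
    ∀ (l : List (Cl n)), List.Pairwise Disjoint l →
      (∀ h : l ≠ [], t ≤ (l.getLast h).card) →
      massOf (pairup t l) = massOf l
  | [], _, _ => by simp [pairup]
  | [a], _, hlast => by
    have h := hlast (by simp)
    simp only [List.getLast_singleton] at h
    rw [pairup, if_pos h]
  | a :: b :: l, hd, hlast => by
    rw [pairup]
    have hab : Disjoint a b := (List.pairwise_cons.mp hd).1 b (by simp)
    have hl : List.Pairwise Disjoint l := (List.pairwise_cons.mp (List.pairwise_cons.mp hd).2).2
    have ih : massOf (pairup t l) = massOf l := by
      refine pairup_mass_eq l hl ?_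
      intro h
      have := hlast (by simp)
      rwa [List.getLast_cons (by simp), List.getLast_cons h] at this
    simp only [massOf, List.map_cons, List.sum_cons] at *
    rw [Finset.card_union_of_disjoint hab, ih]
    omega

lemma pairup_length {t : ℕ} :
    ∀ (l : List (Cl n)), (pairup t l).length ≤ (l.length + 1) / 2
  | [] => by simp [pairup]
  | [a] => by rw [pairup]; split <;> simp
  | a :: b :: l => by
    rw [pairup]
    have := pairup_length (t := t) l
    simp only [List.length_cons]
    omega

lemma pairup_subset {t : ℕ} (l : List (Cl n)) (C : Cl n) (hC : C ∈ pairup t l) :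
    ∀ x ∈ C, ∃ a ∈ l, x ∈ a := by
  intro x hx
  rcases mem_pairup l C hC with h | ⟨a, ha, b, hb, rfl⟩
  · exact ⟨C, h, hx⟩
  · rcases Finset.mem_union.mp hx with h | h
    · exact ⟨a, ha, h⟩
    · exact ⟨b, hb, h⟩


def step (n D₀ j : ℕ) (l : List (Cl n)) : List (Cl n) :=
  (Kfin n D₀ j).toList.flatMap
    (fun k => pairup (R (j+1)) (sortC (l.filter (fun C => decide (κ D₀ j C = k)))))

lemma bb_pos {D₀ : ℕ} (hD₀ : 1 ≤ D₀) (j : ℕ) : 1 ≤ bb D₀ j := by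
  unfold bb; split
  · exact hD₀
  · exact le_trans hD₀ (Nat.le_mul_of_pos_left D₀ (by positivity))

lemma R_succ_le (j : ℕ) : R (j+1) ≤ 2 * R j := by
  unfold R
  rw [← pow_succ']
  exact Nat.pow_le_pow_right (by norm_num) (by omega)

lemma Ebd_mono {D₀ : ℕ} (j : ℕ) : Ebd D₀ j ≤ Ebd D₀ (j+1) := by
  unfold Ebd
  simp only [Nat.add_sub_cancel, if_neg (Nat.succ_ne_zero j)]
  split
  · exact Nat.zero_le _
  · exact Nat.mul_le_mul_right _ (Nat.pow_le_pow_right (by norm_num) (by omega))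

lemma Ebd_succ {D₀ : ℕ} (hD₀ : 1 ≤ D₀) (j : ℕ) :
    2 * Ebd D₀ j + (bb D₀ j - 1) ≤ Ebd D₀ (j+1) := by
  cases j with
  | zero =>
    have e1 : Ebd D₀ 0 = 0 := rfl
    have e2 : bb D₀ 0 = D₀ := rfl
    have e3 : Ebd D₀ 1 = 6 ^ 0 * D₀ := rfl
    rw [e1, e2, e3, pow_zero, one_mul]
    omega
  | succ m =>
    have e1 : Ebd D₀ (m+1) = 6 ^ m * D₀ := rfl
    have e2 : bb D₀ (m+1) = 4 * 6 ^ m * D₀ := rfl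
    have e3 : Ebd D₀ (m+2) = 6 ^ (m+1) * D₀ := rfl
    have h6 : (6:ℕ) ^ (m+1) * D₀ = 6 * (6 ^ m * D₀) := by rw [pow_succ]; ring
    have h4 : 4 * 6 ^ m * D₀ = 4 * (6 ^ m * D₀) := by ring
    have hX : 1 ≤ 6 ^ m * D₀ := Nat.one_le_iff_ne_zero.mpr (by positivity)
    rw [e1, e2, e3, h6, h4]
    omega

lemma kappa_val_lt [NeZero n] (D₀ j : ℕ) (hD₀ : 1 ≤ D₀) (C : Cl n) (i : Fin 2) :
    (rep C i).val / bb D₀ j < n / bb D₀ j + 1 := by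
  have h1 : (rep C i).val < n := ZMod.val_lt _
  have := Nat.div_le_div_right (c := bb D₀ j) (Nat.le_of_lt h1)
  omega

lemma kappa_mem_Kfin [NeZero n] (D₀ j : ℕ) (hD₀ : 1 ≤ D₀) (C : Cl n) :
    κ D₀ j C ∈ Kfin n D₀ j := by
  rw [Kfin, Finset.mem_product]
  constructor <;> rw [Finset.mem_range] <;> exact kappa_val_lt D₀ j hD₀ C _

lemma kappa_const [NeZero n] (D₀ j : ℕ) (hbn : n ≤ bb D₀ j) (C : Cl n) :
    κ D₀ j C = (0, 0) := by
  have h0 : (rep C 0).val < bb D₀ j := lt_of_lt_of_le (ZMod.val_lt _) hbn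
  have h1 : (rep C 1).val < bb D₀ j := lt_of_lt_of_le (ZMod.val_lt _) hbn
  rw [κ, Nat.div_eq_of_lt h0, Nat.div_eq_of_lt h1]

/-- grouping a sum by key -/
lemma group_sum (w : Cl n → ℕ) (K : Finset (ℕ × ℕ)) (f : Cl n → ℕ × ℕ) :
    ∀ (l : List (Cl n)), (∀ C ∈ l, f C ∈ K) →
      ∑ k ∈ K, ((l.filter (fun C => decide (f C = k))).map w).sum = (l.map w).sum
  | [], _ => by simp
  | a :: l, h => by
    have ih := group_sum w K f l (fun C hC => h C (by simp [hC]))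
    have expand : ∀ k : ℕ × ℕ,
        (((a :: l).filter (fun C => decide (f C = k))).map w).sum =
          ((l.filter (fun C => decide (f C = k))).map w).sum
            + (if k = f a then w a else 0) := by
      intro k
      rw [List.filter_cons]
      by_cases hk : f a = k
      · rw [if_pos (by simp [hk]), if_pos hk.symm]
        simp [add_comm]
      · rw [if_neg (by simp [hk]), if_neg (fun hh => hk hh.symm)]
        simp
    rw [Finset.sum_congr rfl (fun k _ => expand k), Finset.sum_add_distrib,
      Finset.sum_ite_eq' K (f a) (fun _ => w a), if_pos (h a (by simp)), ih]
    simp [add_comm]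

lemma massOf_step (n D₀ j : ℕ) (l : List (Cl n)) :
    massOf (step n D₀ j l) =
      ∑ k ∈ Kfin n D₀ j,
        massOf (pairup (R (j+1)) (sortC (l.filter (fun C => decide (κ D₀ j C = k))))) := by
  rw [massOf, step, List.map_flatMap]
  rw [List.flatMap_def, List.sum_flatten, List.map_map]
  rw [← Finset.sum_map_toList]
  rfl

lemma length_step (n D₀ j : ℕ) (l : List (Cl n)) :
    (step n D₀ j l).length =
      ∑ k ∈ Kfin n D₀ j,
        (pairup (R (j+1)) (sortC (l.filter (fun C => decide (κ D₀ j C = k))))).length := by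
  rw [step, List.length_flatMap, ← Finset.sum_map_toList]

lemma mem_step {D₀ j : ℕ} {l : List (Cl n)} {C : Cl n} (h : C ∈ step n D₀ j l) :
    ∃ k ∈ Kfin n D₀ j,
      C ∈ pairup (R (j+1)) (sortC (l.filter (fun C => decide (κ D₀ j C = k)))) := by
  rcases List.mem_flatMap.mp h with ⟨k, hk, hC⟩
  exact ⟨k, Finset.mem_toList.mp hk, hC⟩

lemma mem_group {D₀ j : ℕ} {l : List (Cl n)} {k : ℕ × ℕ} {C : Cl n}
    (h : C ∈ sortC (l.filter (fun C => decide (κ D₀ j C = k)))) :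
    C ∈ l ∧ κ D₀ j C = k := by
  have h2 := (sortC_perm _).mem_iff.mp h
  rcases List.mem_filter.mp h2 with ⟨h3, h4⟩
  exact ⟨h3, of_decide_eq_true h4⟩

lemma group_pairwise_disjoint {D₀ j : ℕ} {l : List (Cl n)} {k : ℕ × ℕ}
    (hd : List.Pairwise Disjoint l) :
    List.Pairwise Disjoint (sortC (l.filter (fun C => decide (κ D₀ j C = k)))) := by
  refine ((sortC_perm _).pairwise_iff ?_).mpr (List.Pairwise.sublist (List.filter_sublist (l := l)) hd)
  exact fun h => h.symm

lemma step_mem_orig {D₀ j : ℕ} {l : List (Cl n)} {C : Cl n} (h : C ∈ step n D₀ j l) :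
    C ∈ l ∨ ∃ a ∈ l, ∃ b ∈ l, κ D₀ j a = κ D₀ j b ∧ C = a ∪ b := by
  rcases mem_step h with ⟨k, _, hC⟩
  rcases mem_pairup _ C hC with h' | ⟨a, ha, b, hb, rfl⟩
  · exact Or.inl (mem_group h').1
  · rcases mem_group ha with ⟨ha1, ha2⟩
    rcases mem_group hb with ⟨hb1, hb2⟩
    exact Or.inr ⟨a, ha1, b, hb1, by rw [ha2, hb2], rfl⟩


lemma zero_mem_Kfin (n D₀ j : ℕ) : ((0,0) : ℕ × ℕ) ∈ Kfin n D₀ j := by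
  rw [Kfin, Finset.mem_product]
  simp

lemma union_diam [NeZero n] {D₀ j : ℕ} (hD₀ : 1 ≤ D₀) {a b : Cl n}
    (hk : κ D₀ j a = κ D₀ j b)
    (hda : ∀ x ∈ a, ∀ y ∈ a, torusDist x y ≤ Ebd D₀ j)
    (hdb : ∀ x ∈ b, ∀ y ∈ b, torusDist x y ≤ Ebd D₀ j)
    (hna : a.Nonempty) (hnb : b.Nonempty) :
    ∀ x ∈ a ∪ b, ∀ y ∈ a ∪ b, torusDist x y ≤ Ebd D₀ (j+1) := by
  have hbox : torusDist (rep a) (rep b) ≤ bb D₀ j - 1 := by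
    apply torusDist_same_box _ _ _ (bb_pos hD₀ j)
    intro i
    fin_cases i
    · exact congrArg Prod.fst hk
    · exact congrArg Prod.snd hk
  have hEs := Ebd_succ hD₀ j
  have key : ∀ x ∈ a, ∀ y ∈ b, torusDist x y ≤ Ebd D₀ (j+1) := by
    intro x hx y hy
    have t1 : torusDist x y ≤ torusDist x (rep a) + torusDist (rep a) y :=
      torusDist_triangle _ _ _
    have t2 : torusDist (rep a) y ≤ torusDist (rep a) (rep b) + torusDist (rep b) y :=
      torusDist_triangle _ _ _
    have d1 : torusDist x (rep a) ≤ Ebd D₀ j := hda x hx _ (rep_mem hna)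
    have d2 : torusDist (rep b) y ≤ Ebd D₀ j := hdb _ (rep_mem hnb) y hy
    omega
  have hmono := Ebd_mono (D₀ := D₀) j
  intro x hx y hy
  rcases Finset.mem_union.mp hx with hxa | hxb <;> rcases Finset.mem_union.mp hy with hya | hyb
  · exact le_trans (hda x hxa y hya) hmono
  · exact key x hxa y hyb
  · rw [torusDist_comm]; exact key y hya x hxb
  · exact le_trans (hdb x hxb y hyb) hmono

structure Inv (n D₀ : ℕ) (A : Set (Pt n)) (j : ℕ) (l : List (Cl n)) : Prop where
  ne : ∀ C ∈ l, C.Nonempty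
  dis : List.Pairwise Disjoint l
  sub : ∀ C ∈ l, (C : Set (Pt n)) ⊆ A
  big : ∀ C ∈ l, R j ≤ C.card
  dia : ∀ C ∈ l, ∀ x ∈ C, ∀ y ∈ C, torusDist x y ≤ Ebd D₀ j

lemma step_inv [NeZero n] {D₀ : ℕ} (hD₀ : 1 ≤ D₀) {A : Set (Pt n)} {j : ℕ}
    {l : List (Cl n)} (h : Inv n D₀ A j l) :
    Inv n D₀ A (j+1) (step n D₀ j l) := by
  have hval : ∀ a ∈ l, ∀ b ∈ l, a ≠ b → Disjoint a b :=
    by haveI : Std.Symm (α := Cl n) Disjoint := ⟨fun _ _ hh => hh.symm⟩; exact fun a ha b hb => h.dis.forall ha hb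
  constructor
  · intro C hC
    rcases mem_step hC with ⟨k, _, hp⟩
    exact pairup_nonempty _ (fun C' hC' => h.ne _ (mem_group hC').1) C hp
  · rw [step, List.flatMap_def]
    rw [List.pairwise_flatten]
    refine ⟨?_, ?_⟩
    · intro l' hl'
      rcases List.mem_map.mp hl' with ⟨k, _, rfl⟩
      exact pairup_disjoint _ (group_pairwise_disjoint h.dis)
    · rw [List.pairwise_map]
      refine List.Pairwise.imp ?_ (Finset.nodup_toList (Kfin n D₀ j))
      intro k₁ k₂ hne C hC C' hC'
      rw [Finset.disjoint_left]
      intro x hxC hxC'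
      obtain ⟨a, ha, hxa⟩ := pairup_subset _ C hC x hxC
      obtain ⟨b, hb, hxb⟩ := pairup_subset _ C' hC' x hxC'
      rcases mem_group ha with ⟨ha1, ha2⟩
      rcases mem_group hb with ⟨hb1, hb2⟩
      have hab : a ≠ b := fun hh => hne (by rw [← ha2, ← hb2, hh])
      exact Finset.disjoint_left.mp (hval a ha1 b hb1 hab) hxa hxb
  · intro C hC
    rcases mem_step hC with ⟨k, _, hp⟩
    intro x hx
    obtain ⟨a, ha, hxa⟩ := pairup_subset _ C hp x hx
    exact h.sub a (mem_group ha).1 hxa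
  · intro C hC
    rcases mem_step hC with ⟨k, _, hp⟩
    exact pairup_card (R_succ_le j) _
      (fun C' hC' => h.big _ (mem_group hC').1)
      (group_pairwise_disjoint h.dis) C hp
  · intro C hC
    rcases mem_step hC with ⟨k, _, hp⟩
    rcases mem_pairup _ C hp with h' | ⟨a, ha, b, hb, rfl⟩
    · intro x hx y hy
      exact le_trans (h.dia C (mem_group h').1 x hx y hy) (Ebd_mono j)
    · rcases mem_group ha with ⟨ha1, ha2⟩
      rcases mem_group hb with ⟨hb1, hb2⟩
      exact union_diam hD₀ (by rw [ha2, hb2]) (h.dia a ha1) (h.dia b hb1)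
        (h.ne a ha1) (h.ne b hb1)

lemma massOf_sortC (l : List (Cl n)) : massOf (sortC l) = massOf l :=
  List.Perm.sum_eq ((sortC_perm l).map Finset.card)

lemma step_mass_le [NeZero n] {D₀ : ℕ} (hD₀ : 1 ≤ D₀) {A : Set (Pt n)} {j : ℕ}
    {l : List (Cl n)} (h : Inv n D₀ A j l) :
    massOf l ≤ massOf (step n D₀ j l) + (Kfin n D₀ j).card * (R (j+1) - 1) := by
  rw [massOf_step]
  have hgroup := group_sum Finset.card (Kfin n D₀ j) (κ D₀ j) l
    (fun C _ => kappa_mem_Kfin D₀ j hD₀ C)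
  have hper : ∀ k ∈ Kfin n D₀ j,
      ((l.filter (fun C => decide (κ D₀ j C = k))).map Finset.card).sum ≤
        massOf (pairup (R (j+1)) (sortC (l.filter (fun C => decide (κ D₀ j C = k)))))
          + (R (j+1) - 1) := by
    intro k _
    have h1 : massOf (l.filter (fun C => decide (κ D₀ j C = k))) ≤ _ + _ :=
      le_trans (le_of_eq (massOf_sortC _).symm)
        (pairup_mass (t := R (j+1)) _ (group_pairwise_disjoint h.dis))
    exact h1
  calc massOf l
      = ∑ k ∈ Kfin n D₀ j, ((l.filter (fun C => decide (κ D₀ j C = k))).map Finset.card).sum :=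
        hgroup.symm
    _ ≤ ∑ k ∈ Kfin n D₀ j,
        (massOf (pairup (R (j+1)) (sortC (l.filter (fun C => decide (κ D₀ j C = k)))))
          + (R (j+1) - 1)) := Finset.sum_le_sum hper
    _ = _ := by rw [Finset.sum_add_distrib, Finset.sum_const, smul_eq_mul]

lemma filter_key_all [NeZero n] {D₀ j : ℕ} (hbn : n ≤ bb D₀ j) (l : List (Cl n)) :
    l.filter (fun C => decide (κ D₀ j C = ((0,0) : ℕ × ℕ))) = l := by
  rw [List.filter_eq_self]
  intro a _
  simp [kappa_const D₀ j hbn a]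

lemma filter_key_nil [NeZero n] {D₀ j : ℕ} (hbn : n ≤ bb D₀ j) (l : List (Cl n))
    {k : ℕ × ℕ} (hk : k ≠ (0,0)) :
    l.filter (fun C => decide (κ D₀ j C = k)) = [] := by
  rw [List.filter_eq_nil_iff]
  intro a _
  simp only [decide_eq_true_eq, kappa_const D₀ j hbn a]
  exact fun hh => hk hh.symm

lemma step_mass_eq [NeZero n] {D₀ : ℕ} {A : Set (Pt n)} {j : ℕ}
    {l : List (Cl n)} (hD₀ : 1 ≤ D₀) (hbn : n ≤ bb D₀ j) (h : Inv n D₀ A j l)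
    (hwit : ∃ C ∈ l, R (j+1) ≤ C.card) :
    massOf (step n D₀ j l) = massOf l := by
  rw [massOf_step]
  have hper : ∀ k ∈ Kfin n D₀ j,
      massOf (pairup (R (j+1)) (sortC (l.filter (fun C => decide (κ D₀ j C = k))))) =
        ((l.filter (fun C => decide (κ D₀ j C = k))).map Finset.card).sum := by
    intro k _
    by_cases hk : k = (0,0)
    · subst hk
      rw [filter_key_all hbn]
      calc massOf (pairup (R (j+1)) (sortC l))
          = massOf (sortC l) := by
            refine pairup_mass_eq (sortC l)
              (((sortC_perm l).pairwise_iff (fun hh => hh.symm)).mpr h.dis) ?_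
            intro hne
            obtain ⟨C, hC, hCc⟩ := hwit
            exact le_trans hCc
              (sorted_le_getLast _ hne (sortC_sorted l) C ((sortC_perm l).mem_iff.mpr hC))
        _ = massOf l := massOf_sortC l
    · rw [filter_key_nil hbn l hk]
      rfl
  rw [Finset.sum_congr rfl hper]
  exact group_sum Finset.card (Kfin n D₀ j) (κ D₀ j) l (fun C _ => kappa_mem_Kfin D₀ j hD₀ C)


lemma step_length_single [NeZero n] {D₀ j : ℕ} (hbn : n ≤ bb D₀ j) (l : List (Cl n)) :
    (step n D₀ j l).length ≤ (l.length + 1) / 2 := by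
  rw [length_step]
  rw [Finset.sum_eq_single_of_mem ((0,0) : ℕ × ℕ) (zero_mem_Kfin n D₀ j)
    (fun k _ hk => by rw [filter_key_nil hbn l hk]; rfl)]
  rw [filter_key_all hbn]
  calc (pairup (R (j+1)) (sortC l)).length ≤ ((sortC l).length + 1) / 2 := pairup_length _
    _ = (l.length + 1) / 2 := by rw [(sortC_perm l).length_eq]

lemma step_witness [NeZero n] {D₀ j : ℕ} {A : Set (Pt n)} (hbn : n ≤ bb D₀ j)
    {l : List (Cl n)} (h : Inv n D₀ A j l) (hlen : 2 ≤ l.length) :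
    ∃ C ∈ step n D₀ j l, 2 * R j ≤ C.card := by
  have hfil := filter_key_all (l := l) hbn
  have hlen2 : 2 ≤ (sortC l).length := by rw [(sortC_perm l).length_eq]; exact hlen
  have hdis : List.Pairwise Disjoint (sortC l) :=
    ((sortC_perm l).pairwise_iff (fun hh => hh.symm)).mpr h.dis
  cases hsl : sortC l with
  | nil => rw [hsl] at hlen2; simp at hlen2
  | cons a t =>
    cases t with
    | nil => rw [hsl] at hlen2; simp at hlen2
    | cons b rest =>
      have hmema : a ∈ l := (sortC_perm l).mem_iff.mp (by rw [hsl]; simp)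
      have hmemb : b ∈ l := (sortC_perm l).mem_iff.mp (by rw [hsl]; simp)
      have hd : Disjoint a b := by
        rw [hsl] at hdis
        exact (List.pairwise_cons.mp hdis).1 b (by simp)
      refine ⟨a ∪ b, ?_, ?_⟩
      · rw [step]
        refine List.mem_flatMap.mpr ⟨(0,0), Finset.mem_toList.mpr (zero_mem_Kfin n D₀ j), ?_⟩
        rw [hfil, hsl, pairup]
        exact List.mem_cons_self
      · rw [Finset.card_union_of_disjoint hd]
        have := h.big a hmema
        have := h.big b hmemb
        omega

lemma torusDist_self_le [NeZero n] (x : Pt n) : torusDist x x ≤ 0 := by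
  refine torusDist_le x x (fun i => ((x i).val : ℤ)) (fun i => ((x i).val : ℤ))
    (fun i => by simp [ZMod.natCast_val, ZMod.intCast_cast])
    (fun i => by simp [ZMod.natCast_val, ZMod.intCast_cast]) ?_
  intro i; simp

noncomputable def st (n D₀ : ℕ) [NeZero n] (A : Set (Pt n)) : ℕ → List (Cl n)
  | 0 => ((Set.toFinite A).toFinset.toList).map (fun x => ({x} : Cl n))
  | j+1 => step n D₀ j (st n D₀ A j)

lemma st_inv [NeZero n] {D₀ : ℕ} (hD₀ : 1 ≤ D₀) (A : Set (Pt n)) :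
    ∀ j, Inv n D₀ A j (st n D₀ A j)
  | 0 => by
    simp only [st]
    constructor
    · intro C hC
      rcases List.mem_map.mp hC with ⟨x, _, rfl⟩
      exact ⟨x, by simp⟩
    · rw [List.pairwise_map]
      refine List.Pairwise.imp ?_ ((Set.toFinite A).toFinset.nodup_toList)
      intro x y hxy
      simp [Finset.disjoint_singleton, hxy, Ne.symm hxy]
    · intro C hC
      rcases List.mem_map.mp hC with ⟨x, hx, rfl⟩
      intro y hy
      simp only [Finset.coe_singleton, Set.mem_singleton_iff] at hy
      subst hy
      exact (Set.Finite.mem_toFinset _).mp (Finset.mem_toList.mp hx)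
    · intro C hC
      rcases List.mem_map.mp hC with ⟨x, _, rfl⟩
      simp [R]
    · intro C hC
      rcases List.mem_map.mp hC with ⟨x, _, rfl⟩
      intro a ha b hb
      simp only [Finset.mem_singleton] at ha hb
      subst ha; subst hb
      have h0 : Ebd D₀ 0 = 0 := rfl
      rw [h0]
      exact torusDist_self_le _
  | (j+1) => step_inv hD₀ (st_inv hD₀ A j)

lemma bb_mono {D₀ : ℕ} (hD₀ : 1 ≤ D₀) (j : ℕ) : bb D₀ j ≤ bb D₀ (j+1) := by
  cases j with
  | zero =>
    have e1 : bb D₀ 0 = D₀ := rfl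
    have e2 : bb D₀ 1 = 4 * 6 ^ 0 * D₀ := rfl
    rw [e1, e2]; simp; omega
  | succ m =>
    have e1 : bb D₀ (m+1) = 4 * 6 ^ m * D₀ := rfl
    have e2 : bb D₀ (m+2) = 4 * 6 ^ (m+1) * D₀ := rfl
    rw [e1, e2]
    have : (6:ℕ) ^ m ≤ 6 ^ (m+1) := Nat.pow_le_pow_right (by norm_num) (by omega)
    nlinarith

lemma bb_big {D₀ : ℕ} (hD₀ : 1 ≤ D₀) {j : ℕ} (hj : n ≤ j) : n ≤ bb D₀ (j+1) := by
  have e1 : bb D₀ (j+1) = 4 * 6 ^ j * D₀ := rfl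
  have h1 : j < 6 ^ j := Nat.lt_pow_self (by norm_num)
  have h2 : 6 ^ j ≤ 4 * 6 ^ j * D₀ := by nlinarith
  omega

lemma st_terminates [NeZero n] {D₀ : ℕ} (hD₀ : 1 ≤ D₀) (A : Set (Pt n)) :
    ∃ j, (st n D₀ A j).length ≤ 1 := by
  by_contra hcon
  push_neg at hcon
  have hlen2 : ∀ j, 2 ≤ (st n D₀ A j).length := fun j => hcon j
  have key : ∀ k, (st n D₀ A (n + 1 + k)).length + k ≤ (st n D₀ A (n + 1)).length := by
    intro k
    induction k with
    | zero => simp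
    | succ m ih =>
      have hstep : (st n D₀ A (n + 1 + m + 1)).length ≤ ((st n D₀ A (n + 1 + m)).length + 1) / 2 := by
        have : st n D₀ A (n + 1 + m + 1) = step n D₀ (n + 1 + m) (st n D₀ A (n + 1 + m)) := rfl
        rw [this]
        apply step_length_single
        cases m with
        | zero => simpa using bb_big (n := n) hD₀ (le_refl n)
        | succ m' =>
          have := bb_big (n := n) (D₀ := D₀) hD₀ (by omega : n ≤ n + m' + 1)
          simpa [show n + 1 + (m' + 1) = (n + m' + 1) + 1 by omega] using this
      have h2 := hlen2 (n + 1 + m)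
      have : (st n D₀ A (n + 1 + (m+1))).length ≤ (st n D₀ A (n + 1 + m)).length - 1 := by
        have e : n + 1 + (m + 1) = n + 1 + m + 1 := by omega
        rw [e]
        omega
      omega
  have := key ((st n D₀ A (n + 1)).length)
  have := hlen2 (n + 1 + (st n D₀ A (n + 1)).length)
  omega


def Lb (n D₀ i : ℕ) : ℕ :=
  if 1 ≤ i ∧ n ≤ bb D₀ (i-1) then 0 else (Kfin n D₀ i).card * (R (i+1) - 1)

lemma R_double {i : ℕ} (hi : 1 ≤ i) : R (i+1) = 2 * R (i-1) := by
  unfold R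
  rw [← pow_succ']
  congr 1
  omega

lemma st_mass_step [NeZero n] {D₀ : ℕ} (hD₀ : 1 ≤ D₀) (A : Set (Pt n)) (i : ℕ)
    (hprev : ∀ k < i, 2 ≤ (st n D₀ A k).length) :
    massOf (st n D₀ A i) ≤ massOf (st n D₀ A (i+1)) + Lb n D₀ i := by
  unfold Lb
  split
  case isTrue h =>
    obtain ⟨hi, hbn'⟩ := h
    cases i with
    | zero => omega
    | succ m =>
      simp only [Nat.add_sub_cancel] at hbn'
      have hbn : n ≤ bb D₀ (m+1) := le_trans hbn' (bb_mono hD₀ m)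
      have hwit : ∃ C ∈ st n D₀ A (m+1), R (m+2) ≤ C.card := by
        have hw := step_witness (A := A) (j := m) hbn' (st_inv hD₀ A m) (hprev m (by omega))
        obtain ⟨C, hC, hcard⟩ := hw
        refine ⟨C, hC, ?_⟩
        have : R (m+2) = 2 * R m := by
          have := R_double (i := m+1) (by omega)
          simpa using this
        omega
      have hme := step_mass_eq hD₀ hbn (st_inv hD₀ A (m+1)) hwit
      have e2 : st n D₀ A (m+2) = step n D₀ (m+1) (st n D₀ A (m+1)) := rfl
      rw [e2, hme]
      omega
  case isFalse h =>
    have e2 : st n D₀ A (i+1) = step n D₀ i (st n D₀ A i) := rfl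
    rw [e2]
    exact step_mass_le hD₀ (st_inv hD₀ A i)

lemma st_mass_chain [NeZero n] {D₀ : ℕ} (hD₀ : 1 ≤ D₀) (A : Set (Pt n)) {J : ℕ}
    (hprev : ∀ k < J, 2 ≤ (st n D₀ A k).length) :
    ∀ j ≤ J, massOf (st n D₀ A 0) ≤ massOf (st n D₀ A j) + ∑ i ∈ Finset.range j, Lb n D₀ i := by
  intro j
  induction j with
  | zero => simp
  | succ m ih =>
    intro hm
    have h1 := ih (by omega)
    have h2 := st_mass_step hD₀ A m (fun k hk => hprev k (by omega))
    rw [Finset.sum_range_succ]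
    omega

lemma massOf_st_zero [NeZero n] {D₀ : ℕ} (A : Set (Pt n)) :
    massOf (st n D₀ A 0) = A.ncard := by
  simp only [st, massOf, List.map_map]
  have : ((Set.toFinite A).toFinset.toList.map (Finset.card ∘ fun x => ({x} : Cl n))) =
      (Set.toFinite A).toFinset.toList.map (fun _ => 1) := by
    apply List.map_congr_left
    intro x _
    simp
  rw [this]
  rw [List.map_const', List.sum_replicate, smul_eq_mul, mul_one, Finset.length_toList]
  exact (Set.ncard_eq_toFinset_card A (Set.toFinite A)).symm


lemma Kfin_card (n D₀ j : ℕ) :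
    (Kfin n D₀ j).card = (n / bb D₀ j + 1) * (n / bb D₀ j + 1) := by
  rw [Kfin, Finset.card_product, Finset.card_range]

lemma bb_succ6 {D₀ : ℕ} (hD₀ : 1 ≤ D₀) (i : ℕ) : bb D₀ (i+1) ≤ 6 * bb D₀ i := by
  cases i with
  | zero =>
    have e1 : bb D₀ 0 = D₀ := rfl
    have e2 : bb D₀ 1 = 4 * 6 ^ 0 * D₀ := rfl
    rw [e1, e2]; simp; omega
  | succ m =>
    have e1 : bb D₀ (m+1) = 4 * 6 ^ m * D₀ := rfl
    have e2 : bb D₀ (m+2) = 4 * 6 ^ (m+1) * D₀ := rfl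
    rw [e1, e2, pow_succ]
    nlinarith [Nat.one_le_iff_ne_zero.mpr (pow_ne_zero m (by norm_num : (6:ℕ) ≠ 0))]

lemma Lb_zero (n D₀ : ℕ) : Lb n D₀ 0 = 0 := by
  simp only [Lb]
  rw [if_neg (by simp)]
  have : R 1 - 1 = 0 := rfl
  rw [this, Nat.mul_zero]

lemma Lb_succ_bound {n D₀ : ℕ} (hD₀ : 1 ≤ D₀) (hn : 1 ≤ n) (i : ℕ) :
    (Lb n D₀ (i+1) : ℝ) ≤ 112 * (1/2)^(i+1) * ((n:ℝ)^2 / (D₀:ℝ)^2) := by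
  have hD₀pos : (0:ℝ) < D₀ := by exact_mod_cast hD₀
  have hnpos : (0:ℝ) < n := by exact_mod_cast hn
  unfold Lb
  split
  · simp only [Nat.cast_zero]
    positivity
  · rename_i h
    have hbn : bb D₀ i < n := by
      push_neg at h
      exact h (by omega)
    rw [Kfin_card]
    set B : ℕ := bb D₀ (i+1) with hBdef
    set q : ℕ := n / B with hq
    set r : ℕ := R (i+2) - 1 with hr
    have hBval : (B:ℝ) = 4 * 6^i * (D₀:ℝ) := by
      have : bb D₀ (i+1) = 4 * 6^i * D₀ := rfl
      rw [hBdef, this]; push_cast; ring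
    have hBpos : (0:ℝ) < B := by rw [hBval]; positivity
    have f1 : (q:ℝ) ≤ (n:ℝ) / B := by rw [hq]; exact Nat.cast_div_le
    have f2 : (B:ℝ) ≤ 6 * (bb D₀ i : ℝ) := by
      have := bb_succ6 hD₀ i
      exact_mod_cast this
    have f3 : (bb D₀ i : ℝ) < n := by exact_mod_cast hbn
    have f4 : (1:ℝ) ≤ 6 * (n:ℝ) / B := by
      rw [le_div_iff₀ hBpos]
      linarith
    have hq1 : (q:ℝ) + 1 ≤ 7 * (n:ℝ) / B := by
      have e : (n:ℝ)/B + 6*(n:ℝ)/B = 7*(n:ℝ)/B := by ring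
      linarith
    have hrb : (r:ℝ) ≤ 2^(i+1) := by
      have h1 : r ≤ 2^(i+1) := by
        have h2 : R (i+2) ≤ 2^(i+1) := Nat.pow_le_pow_right (by norm_num) (by omega)
        omega
      calc (r:ℝ) ≤ ((2^(i+1) : ℕ) : ℝ) := Nat.cast_le.mpr h1
        _ = 2^(i+1) := by push_cast; ring
    have hq0 : (0:ℝ) ≤ (q:ℝ) + 1 := by positivity
    have key : ((q:ℝ)+1) * ((q:ℝ)+1) * (r:ℝ) ≤ (7*(n:ℝ)/B) * (7*(n:ℝ)/B) * 2^(i+1) := by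
      have hstep : ((q:ℝ)+1) * ((q:ℝ)+1) ≤ (7*(n:ℝ)/B) * (7*(n:ℝ)/B) :=
        mul_le_mul hq1 hq1 hq0 (by positivity)
      exact mul_le_mul hstep hrb (by positivity) (by positivity)
    have hnat : (49 * 4^(i+1) : ℝ) ≤ 1792 * 36^i := by
      have hℕ : (49 * 4^(i+1) : ℕ) ≤ 1792 * 36^i := by
        have h4 : (4:ℕ)^(i+1) = 4 * 4^i := by rw [pow_succ]; ring
        have h5 : (4:ℕ)^i ≤ 36^i := Nat.pow_le_pow_left (by norm_num) i
        calc (49 * 4^(i+1) : ℕ) = 196 * 4^i := by rw [h4]; ring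
          _ ≤ 196 * 36^i := Nat.mul_le_mul_left _ h5
          _ ≤ 1792 * 36^i := Nat.mul_le_mul_right _ (by norm_num)
      exact_mod_cast hℕ
    have final : (7*(n:ℝ)/B) * (7*(n:ℝ)/B) * 2^(i+1) ≤ 112 * (1/2)^(i+1) * ((n:ℝ)^2 / (D₀:ℝ)^2) := by
      have h36 : (36:ℝ)^i = 6^i * 6^i := by
        rw [show (36:ℝ) = 6 * 6 by norm_num, mul_pow]
      have h4 : (4:ℝ)^(i+1) = 2^(i+1) * 2^(i+1) := by
        rw [show (4:ℝ) = 2 * 2 by norm_num, mul_pow]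
      have hnat' : 49 * ((2:ℝ)^(i+1) * 2^(i+1)) ≤ 1792 * ((6:ℝ)^i * 6^i) := by
        rw [← h4, ← h36]; exact hnat
      have h6pos : (0:ℝ) < 6^i := by positivity
      have h2pos : (0:ℝ) < (2:ℝ)^(i+1) := by positivity
      rw [hBval]
      have e1 : (7*(n:ℝ)/(4*6^i*(D₀:ℝ))) * (7*(n:ℝ)/(4*6^i*(D₀:ℝ))) * 2^(i+1)
          = (49 * (n:ℝ)^2 * 2^(i+1)) / (16 * ((6:ℝ)^i*6^i) * (D₀:ℝ)^2) := by
        field_simp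
        ring
      have e2 : 112 * (1/2:ℝ)^(i+1) * ((n:ℝ)^2/(D₀:ℝ)^2)
          = (112 * (n:ℝ)^2) / ((2:ℝ)^(i+1) * (D₀:ℝ)^2) := by
        rw [one_div, inv_pow]
        field_simp
      rw [e1, e2]
      rw [div_le_div_iff₀ (by positivity) (by positivity)]
      have hfin := mul_le_mul_of_nonneg_right hnat'
        (le_of_lt (mul_pos (mul_pos hnpos hnpos) (mul_pos hD₀pos hD₀pos)))
      nlinarith [hfin]
    calc ((q + 1) * (q + 1) * r : ℕ) = (((q:ℝ)+1) * ((q:ℝ)+1) * (r:ℝ)) := by push_cast; ring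
      _ ≤ _ := le_trans key final


lemma sum_Lb_le {n D₀ : ℕ} (hD₀ : 1 ≤ D₀) (hn : 1 ≤ n) (J : ℕ) :
    (∑ i ∈ Finset.range J, (Lb n D₀ i : ℝ)) ≤ 144 * (n:ℝ)^2 / (D₀:ℝ)^2 := by
  have hD₀pos : (0:ℝ) < D₀ := by exact_mod_cast hD₀
  have hnpos : (0:ℝ) < n := by exact_mod_cast hn
  have hX : (0:ℝ) ≤ (n:ℝ)^2 / (D₀:ℝ)^2 := by positivity
  cases J with
  | zero =>
    simp
    positivity
  | succ m =>
    rw [Finset.sum_range_succ']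
    rw [Lb_zero]
    simp only [Nat.cast_zero, add_zero]
    have h1 : ∑ i ∈ Finset.range m, (Lb n D₀ (i+1) : ℝ)
        ≤ ∑ i ∈ Finset.range m, 112 * (1/2:ℝ)^(i+1) * ((n:ℝ)^2 / (D₀:ℝ)^2) :=
      Finset.sum_le_sum (fun i _ => Lb_succ_bound hD₀ hn i)
    have h2 : ∑ i ∈ Finset.range m, 112 * (1/2:ℝ)^(i+1) * ((n:ℝ)^2 / (D₀:ℝ)^2)
        = 56 * ((n:ℝ)^2 / (D₀:ℝ)^2) * ∑ i ∈ Finset.range m, (1/2:ℝ)^i := by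
      rw [Finset.mul_sum]
      apply Finset.sum_congr rfl
      intro i _
      rw [pow_succ]
      ring
    have h3 : (∑ i ∈ Finset.range m, (1/2:ℝ)^i) ≤ 2 := sum_geometric_two_le m
    have h4 : 56 * ((n:ℝ)^2 / (D₀:ℝ)^2) * ∑ i ∈ Finset.range m, (1/2:ℝ)^i
        ≤ 56 * ((n:ℝ)^2 / (D₀:ℝ)^2) * 2 := by
      apply mul_le_mul_of_nonneg_left h3
      positivity
    have h5 : 56 * ((n:ℝ)^2 / (D₀:ℝ)^2) * 2 ≤ 144 * (n:ℝ)^2 / (D₀:ℝ)^2 := by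
      rw [mul_comm, ← mul_assoc, mul_div_assoc]
      nlinarith [hX]
    linarith [h1, h2 ▸ h1, h4]

end Dorm
end




/-- **Dormitory hierarchy with singleton clusters at level 0 (low sleep rate, `d = 2`).**
Let `D₀ ≥ 1` and `D j = 6^j D₀`.  For every `n ≥ 1` and every `A ⊆ (ℤ/nℤ)²` with
`|A| ≥ 288 n² / D₀²`, there exists a `(1, D)`-dormitory hierarchy `(A_j, 𝒞_j)_{j ≤ J}`
on `A` with `|A_J| ≥ |A| − 144 n² / D₀²` in which `𝒞₀` contains only singletons. -/
theorem dormitory_hierarchy_singletons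
    (D₀ : ℕ) (hD₀ : 1 ≤ D₀) (D : ℕ → ℕ) (hD : ∀ j, D j = 6 ^ j * D₀)
    (n : ℕ) (hn : 1 ≤ n) (A : Set (Fin 2 → ZMod n))
    (hcard : 288 * (n : ℝ) ^ 2 / (D₀ : ℝ) ^ 2 ≤ (A.ncard : ℝ)) :
    ∃ H : DormitoryHierarchy 2 n 1 D A,
      (A.ncard : ℝ) - 144 * (n : ℝ) ^ 2 / (D₀ : ℝ) ^ 2 ≤ ((H.level H.J).ncard : ℝ) ∧
      ∀ C ∈ H.part 0, ∃ x, C = {x} := by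
  haveI : NeZero n := ⟨by omega⟩
  have hex := Dorm.st_terminates (n := n) (D₀ := D₀) hD₀ A
  set L : ℕ → List (Dorm.Cl n) := Dorm.st n D₀ A with hL
  set J := Nat.find hex with hJdef
  have hJ1 : (L J).length ≤ 1 := Nat.find_spec hex
  have hmin : ∀ i < J, 2 ≤ (L i).length := by
    intro i hi
    have := Nat.find_min hex hi
    omega
  have hinv : ∀ j, Dorm.Inv n D₀ A j (L j) := Dorm.st_inv hD₀ A
  have hmass := Dorm.st_mass_chain hD₀ A hmin J (le_refl J)
  have hmass0 := Dorm.massOf_st_zero (D₀ := D₀) A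
  have hsum := Dorm.sum_Lb_le (n := n) (D₀ := D₀) hD₀ hn J
  have hXpos : (0:ℝ) < (n:ℝ)^2/(D₀:ℝ)^2 := by
    have h1 : (0:ℝ) < n := by exact_mod_cast hn
    have h2 : (0:ℝ) < D₀ := by exact_mod_cast hD₀
    positivity
  have hmassR : (A.ncard : ℝ) - 144 * (n:ℝ)^2/(D₀:ℝ)^2 ≤ (Dorm.massOf (L J) : ℝ) := by
    have hc : (A.ncard : ℝ) ≤ (Dorm.massOf (L J) : ℝ)
        + ∑ i ∈ Finset.range J, (Dorm.Lb n D₀ i : ℝ) := by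
      rw [hmass0] at hmass
      exact_mod_cast hmass
    ring_nf at hsum hc ⊢
    linarith
  have hlenJ : (L J).length = 1 := by
    rcases Nat.lt_or_ge (L J).length 1 with h0 | h1
    · exfalso
      have hm0 : Dorm.massOf (L J) = 0 := by
        cases hLJ : L J with
        | nil => rfl
        | cons a t => rw [hLJ] at h0; simp at h0
      rw [hm0] at hmassR
      simp only [Nat.cast_zero] at hmassR
      have h288 : 288 * (n:ℝ)^2/(D₀:ℝ)^2 = 2 * (144 * (n:ℝ)^2/(D₀:ℝ)^2) := by ring
      ring_nf at hcard hmassR hXpos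
      linarith
    · omega
  obtain ⟨Cfin, hCfin⟩ : ∃ C, L J = [C] := by
    cases hLJ : L J with
    | nil => rw [hLJ] at hlenJ; simp at hlenJ
    | cons a t =>
      cases t with
      | nil => exact ⟨a, rfl⟩
      | cons b t' => rw [hLJ] at hlenJ; simp at hlenJ
  refine ⟨DormitoryHierarchy.mk J
      (fun j => ⋃₀ {S | ∃ C ∈ L j, (C : Set (Fin 2 → ZMod n)) = S})
      (fun j => {S | ∃ C ∈ L j, (C : Set (Fin 2 → ZMod n)) = S})
      ?_ ?_ ?_ ?_ ?_ ?_, ?_, ?_⟩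
  · rintro x ⟨S, ⟨C, hC, rfl⟩, hx⟩
    exact (hinv 0).sub C hC hx
  · rintro j hj x ⟨S, ⟨C, hC, rfl⟩, hx⟩
    have hC' : C ∈ Dorm.step n D₀ j (L j) := hC
    rcases Dorm.step_mem_orig hC' with hCl | ⟨a, ha, b, hb, _, rfl⟩
    · exact ⟨C, ⟨C, hCl, rfl⟩, hx⟩
    · rcases Finset.mem_union.mp (Finset.mem_coe.mp hx) with hxa | hxb
      · exact ⟨a, ⟨a, ha, rfl⟩, hxa⟩
      · exact ⟨b, ⟨b, hb, rfl⟩, hxb⟩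
  · intro j hj
    refine ⟨?_, rfl, ?_⟩
    · rintro S ⟨C, hC, rfl⟩
      exact Finset.coe_nonempty.mpr ((hinv j).ne C hC)
    · rintro S ⟨C, hC, rfl⟩ S' ⟨C', hC', rfl⟩ hne
      have hCC' : C ≠ C' := fun h => hne (by rw [h])
      have hval : Disjoint C C' :=
        by haveI : Std.Symm (α := Dorm.Cl n) Disjoint := ⟨fun _ _ hh => hh.symm⟩; exact (hinv j).dis.forall hC hC' hCC'
      exact Finset.disjoint_coe.mpr hval
  · rintro j hj S ⟨C, hC, rfl⟩
    rw [Set.ncard_coe_finset, mul_one]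
    exact (hinv j).big C hC
  · rintro j hj S ⟨C, hC, rfl⟩ hnC
    have hC' : C ∈ Dorm.step n D₀ j (L j) := hC
    rcases Dorm.step_mem_orig hC' with hCl | ⟨a, ha, b, hb, _, rfl⟩
    · exact absurd ⟨C, hCl, rfl⟩ hnC
    · constructor
      · apply Dorm.torusDiam_le
        intro x hx y hy
        have h1 := (hinv (j+1)).dia _ hC x (Finset.mem_coe.mp hx) y (Finset.mem_coe.mp hy)
        have e : Dorm.Ebd D₀ (j+1) = 6^j * D₀ := rfl
        rw [hD j]
        omega
      · exact ⟨(a : Set (Fin 2 → ZMod n)), ⟨a, ha, rfl⟩,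
          (b : Set (Fin 2 → ZMod n)), ⟨b, hb, rfl⟩, by push_cast; rfl⟩
  · refine ⟨(Cfin : Set (Fin 2 → ZMod n)), ?_⟩
    ext S
    constructor
    · rintro ⟨C, hC, rfl⟩
      rw [hCfin] at hC
      simp only [List.mem_singleton] at hC
      subst hC
      rfl
    · intro hS
      rw [Set.mem_singleton_iff] at hS
      subst hS
      exact ⟨Cfin, by rw [hCfin]; simp, rfl⟩
  · have hlev : (⋃₀ {S | ∃ C ∈ L J, (C : Set (Fin 2 → ZMod n)) = S})
        = (Cfin : Set (Fin 2 → ZMod n)) := by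
      ext x
      constructor
      · rintro ⟨S, ⟨C, hC, rfl⟩, hx⟩
        rw [hCfin] at hC
        simp only [List.mem_singleton] at hC
        subst hC
        exact hx
      · intro hx
        exact ⟨(Cfin : Set (Fin 2 → ZMod n)), ⟨Cfin, by rw [hCfin]; simp, rfl⟩, hx⟩
    simp only [hlev]
    rw [Set.ncard_coe_finset]
    have hm : Dorm.massOf (L J) = Cfin.card := by
      rw [hCfin]
      simp [Dorm.massOf]
    rw [hm] at hmassR
    exact hmassR
  · rintro S ⟨C, hC, rfl⟩
    have hC0 : C ∈ (Set.toFinite A).toFinset.toList.map (fun x => ({x} : Dorm.Cl n)) := hC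
    rcases List.mem_map.mp hC0 with ⟨x, _, rfl⟩
    exact ⟨x, by simp⟩
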